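/- Let X be a real n×q matrix, Z a real m×q matrix, Q_R a real orthogonal m×m matrix, and D½ a real diagonal m×m matrix with nonnegative diagonal entries; set R = Q_R (D½)² Q_Rᵀ and suppose R_e := Z Zᵀ + R is invertible. Define K = (X Zᵀ) R_e⁻¹ and form the pre-array B = [ X − K Z , K Q_R D½ ] (horizontal concatenation, size n×(q+m)). Then B Bᵀ = X Xᵀ − K R_e Kᵀ; that is, B is a generalized square-root factor of the conventional posterior error covariance of the cubature Kalman filter measurement update. -/

import Mathlib

open Matrix

/-- The posterior pre-array `B = [X − K Z, K Q_R D½]` satisfies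
`B Bᵀ = X Xᵀ − K R_e Kᵀ`. -/
theorem posterior_pre_array_gram (n m q : ℕ)
    (X : Matrix (Fin n) (Fin q) ℝ) (Z : Matrix (Fin m) (Fin q) ℝ)
    (QR Dhalf : Matrix (Fin m) (Fin m) ℝ)
    (hQR : QRᵀ * QR = 1) (hDhalf : Dhalf.IsDiag) (hDpos : ∀ i, 0 ≤ Dhalf i i)
    (R : Matrix (Fin m) (Fin m) ℝ) (hR : R = QR * (Dhalf * Dhalf) * QRᵀ)
    (Re : Matrix (Fin m) (Fin m) ℝ) (hRe : Re = Z * Zᵀ + R)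
    (hReInv : IsUnit Re)
    (K : Matrix (Fin n) (Fin m) ℝ) (hK : K = (X * Zᵀ) * Re⁻¹)
    (B : Matrix (Fin n) (Fin q ⊕ Fin m) ℝ)
    (hB : B = fromCols (X - K * Z) (K * QR * Dhalf)) :
    B * Bᵀ = X * Xᵀ - K * Re * Kᵀ := by
  have hdet : IsUnit Re.det := (Matrix.isUnit_iff_isUnit_det Re).mp hReInv
  have hDsym : Dhalfᵀ = Dhalf := hDhalf.isSymm
  have hReSym : Reᵀ = Re := by
    rw [hRe, hR]
    simp [transpose_add, transpose_mul, hDsym, Matrix.mul_assoc]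
  have hKRe : K * Re = X * Zᵀ := by
    rw [hK, Matrix.mul_assoc, Matrix.nonsing_inv_mul Re hdet, Matrix.mul_one]
  have h1 : X * Zᵀ * Kᵀ = K * Re * Kᵀ := by rw [hKRe]
  have h2 : K * Z * Xᵀ = K * Re * Kᵀ := by
    have := congrArg transpose h1
    simpa [transpose_mul, hReSym, Matrix.mul_assoc] using this
  have hKRK : K * QR * Dhalf * (K * QR * Dhalf)ᵀ = K * R * Kᵀ := by
    rw [hR, transpose_mul, transpose_mul, hDsym]
    simp [Matrix.mul_assoc]
  rw [hB, transpose_fromCols, fromCols_mul_fromRows]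
  have expand : (X - K * Z) * (X - K * Z)ᵀ
      = X * Xᵀ - X * Zᵀ * Kᵀ - K * Z * Xᵀ + K * (Z * Zᵀ) * Kᵀ := by
    rw [transpose_sub, transpose_mul, Matrix.sub_mul, Matrix.mul_sub, Matrix.mul_sub]
    simp [Matrix.mul_assoc, sub_eq_add_neg]
    abel
  rw [expand, hKRK, h1, h2]
  have hRRe : K * (Z * Zᵀ) * Kᵀ + K * R * Kᵀ = K * Re * Kᵀ := by
    rw [hRe, Matrix.mul_add, Matrix.add_mul]
  rw [add_assoc, hRRe]
  abel
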